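/- Let n ≥ 2 and let A be an n×n matrix over a commutative ring R. Fix rows p < q and columns u < v (all between 1 and n). Let m(r,c) denote the (r,c) minor of A, i.e. the determinant of A with row r and column c deleted. Then m(p,u) · m(q,v) − m(p,v) · m(q,u) = det(A) · det(B), where B is the (n−2)×(n−2) submatrix of A obtained by deleting rows p and q and columns u and v. In particular no sign correction is needed when minors (rather than cofactors) are used. -/

import Mathlib

/-- `skip a x` is the `x`-th natural number (in increasing order) different from `a`. -/
def skip (a x : ℕ) : ℕ := if x < a then x else x + 1

theorem skip_le (a x : ℕ) : skip a x ≤ x + 1 := by unfold skip; split <;> omega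

/-- The `(i, j)` minor of `A`: the determinant of the `(n-1) × (n-1)` submatrix
obtained from `A` by deleting row `i` and column `j` (no sign attached). -/
def dmMinor {R : Type*} [CommRing R] {n : ℕ} (A : Matrix (Fin n) (Fin n) R)
    (i j : Fin n) : R :=
  (Matrix.of fun r c : Fin (n - 1) =>
    A ⟨skip i.1 r.1, by have := skip_le i.1 r.1; omega⟩
      ⟨skip j.1 c.1, by have := skip_le j.1 c.1; omega⟩).det

open Matrix

section Helpers

lemma succAbove_val {m : ℕ} (i : Fin (m + 1)) (r : Fin m) :
    (i.succAbove r).1 = skip i.1 r.1 := by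
  simp only [Fin.succAbove, skip]
  by_cases h : r.1 < i.1
  · rw [if_pos (by simpa [Fin.lt_def] using h), if_pos h]; rfl
  · rw [if_neg (by simpa [Fin.lt_def] using h), if_neg h]; rfl

lemma skip_skip {a b x : ℕ} (h : a < b) : skip b (skip a x) = skip a (skip (b - 1) x) := by
  simp only [skip]; split_ifs <;> omega

lemma updateRow_mul' {R : Type*} [CommRing R] {n : Type*} [Fintype n] [DecidableEq n]
    (A B : Matrix n n R) (i : n) (r : n → R) :
    (A.updateRow i r) * B = (A * B).updateRow i (r ᵥ* B) := by
  ext k j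
  by_cases h : k = i
  · subst h; simp [mul_apply, vecMul, dotProduct]
  · simp [mul_apply, updateRow_ne h]

lemma updateRow_comm' {R : Type*} [CommRing R] {n : Type*} [Fintype n] [DecidableEq n]
    (A : Matrix n n R) {i j : n} (h : i ≠ j) (r s : n → R) :
    (A.updateRow i r).updateRow j s = (A.updateRow j s).updateRow i r := by
  ext k l
  simp only [updateRow_apply]
  split_ifs with h1 h2 <;> simp_all

lemma dmMinor_eq {R : Type*} [CommRing R] {m : ℕ} (A : Matrix (Fin (m + 2)) (Fin (m + 2)) R)
    (i j : Fin (m + 2)) :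
    dmMinor A i j = (A.submatrix i.succAbove j.succAbove).det := by
  unfold dmMinor
  congr 1
  ext r c
  show A _ _ = A _ _
  congr 1 <;> exact (Fin.ext (succAbove_val _ _)).symm

lemma det_scaled_two_rows {R : Type*} [CommRing R] {m : ℕ} (d : R)
    (p q : Fin (m + 2)) (q' : Fin (m + 1)) (hq : p.succAbove q' = q)
    (r₁ r₂ : Fin (m + 2) → R) :
    (((d • (1 : Matrix (Fin (m + 2)) (Fin (m + 2)) R)).updateRow p r₁).updateRow q r₂).det
      = (r₁ p * r₂ q - r₁ q * r₂ p) * d ^ m := by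
  have hpq : p ≠ q := hq ▸ (Fin.ne_succAbove p q')
  set g : Fin m → Fin (m + 2) := fun k => p.succAbove (q'.succAbove k) with hg
  have hginj : Function.Injective g :=
    Fin.succAbove_right_injective.comp Fin.succAbove_right_injective
  have hgp : ∀ k, g k ≠ p := fun k => Fin.succAbove_ne p _
  have hgq : ∀ k, g k ≠ q := by
    intro k hk
    exact Fin.succAbove_ne q' k (Fin.succAbove_right_injective (hk.trans hq.symm))
  have hfinj : Function.Injective (Sum.elim ![p, q] g) := by
    rintro (a | a) (b | b) hab <;> simp only [Sum.elim_inl, Sum.elim_inr] at hab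
    · congr 1
      fin_cases a <;> fin_cases b <;> simp_all
    · exfalso; fin_cases a
      · exact hgp b (by simpa using hab.symm)
      · exact hgq b (by simpa using hab.symm)
    · exfalso; fin_cases b
      · exact hgp a (by simpa using hab)
      · exact hgq a (by simpa using hab)
    · exact congrArg Sum.inr (hginj hab)
  have hfbij : Function.Bijective (Sum.elim ![p, q] g) :=
    (Fintype.bijective_iff_injective_and_card _).2 ⟨hfinj, by simp; omega⟩
  set e : (Fin 2 ⊕ Fin m) ≃ Fin (m + 2) := Equiv.ofBijective _ hfbij with he
  have hee : ∀ x, e x = Sum.elim ![p, q] g x := fun _ => rfl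
  set M := ((d • (1 : Matrix (Fin (m + 2)) (Fin (m + 2)) R)).updateRow p r₁).updateRow q r₂
    with hM
  have hMe : M.submatrix e e =
      fromBlocks !![r₁ p, r₁ q; r₂ p, r₂ q]
        (of fun i k => ![r₁, r₂] i (g k)) 0 (d • (1 : Matrix (Fin m) (Fin m) R)) := by
    ext (a | a) (b | b) <;>
      simp only [submatrix_apply, hee, Sum.elim_inl, Sum.elim_inr, fromBlocks_apply₁₁,
        fromBlocks_apply₁₂, fromBlocks_apply₂₁, fromBlocks_apply₂₂, of_apply]
    · fin_cases a <;> fin_cases b <;>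
        simp [hM, updateRow_apply, hpq, hpq.symm]
    · fin_cases a <;> simp [hM, updateRow_apply, hpq]
    · fin_cases b <;>
        simp [hM, updateRow_ne (hgq a), updateRow_ne (hgp a), one_apply, hgp a, hgq a]
    · simp [hM, updateRow_ne (hgq a), updateRow_ne (hgp a), one_apply, hginj.eq_iff]
  have hd := det_submatrix_equiv_self e M
  rw [← hd, hMe, det_fromBlocks_zero₂₁, det_fin_two_of, det_smul, det_one]
  simp [Fintype.card_fin, mul_comm]

lemma submatrix_updateRow_of_succAbove {R : Type*} [CommRing R] {m : ℕ}
    (A : Matrix (Fin (m + 2)) (Fin (m + 2)) R) (p : Fin (m + 2)) (q' : Fin (m + 1))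
    (g : Fin (m + 1) → Fin (m + 2)) (b : Fin (m + 2) → R) :
    (A.updateRow (p.succAbove q') b).submatrix p.succAbove g
      = (A.submatrix p.succAbove g).updateRow q' (b ∘ g) := by
  ext i j
  by_cases h : i = q'
  · subst h; simp
  · rw [submatrix_apply, updateRow_ne (fun hc => h (Fin.succAbove_right_injective hc)),
      updateRow_ne h, submatrix_apply]

lemma single_comp_succAbove {R : Type*} [CommRing R] {m : ℕ} (u : Fin (m + 2)) (v' : Fin (m + 1)) :
    (Pi.single (u.succAbove v') (1 : R)) ∘ u.succAbove = Pi.single v' 1 := by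
  funext j
  by_cases h : j = v'
  · subst h; simp
  · rw [Function.comp_apply, Pi.single_eq_of_ne (fun hc => h (Fin.succAbove_right_injective hc)) _,
      Pi.single_eq_of_ne h]

lemma detD_eq {R : Type*} [CommRing R] {m : ℕ} (A : Matrix (Fin (m + 2)) (Fin (m + 2)) R)
    (p u : Fin (m + 2)) (q' v' : Fin (m + 1)) :
    ((A.updateRow p (Pi.single u 1)).updateRow (p.succAbove q')
        (Pi.single (u.succAbove v') 1)).det
      = (-1 : R) ^ (p.1 + u.1) * ((-1 : R) ^ (q'.1 + v'.1) *
          (A.submatrix (p.succAbove ∘ q'.succAbove) (u.succAbove ∘ v'.succAbove)).det) := by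
  rw [updateRow_comm' A (Fin.ne_succAbove p q'), ← adjugate_apply,
    adjugate_fin_succ_eq_det_submatrix, submatrix_updateRow_of_succAbove,
    single_comp_succAbove, ← adjugate_apply, adjugate_fin_succ_eq_det_submatrix,
    submatrix_submatrix]

lemma npow_succ' {R : Type*} [CommRing R] (a : ℕ) : (-1 : R) ^ (a + 1) = -(-1 : R) ^ a := by
  rw [pow_succ]; ring

lemma neg_one_sq_pow {R : Type*} [CommRing R] (a : ℕ) : (-1 : R) ^ a * (-1 : R) ^ a = 1 := by
  rw [← pow_add]; exact Even.neg_one_pow ⟨a, rfl⟩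

lemma sign_algebra {R : Type*} [CommRing R] (x z y w dA B m1 m2 m3 m4 : R) (Dm : ℕ)
    (hx : x * x = 1) (hz : z * z = 1) (hy : y * y = 1) (hw : w * w = 1)
    (h1 : x * z * (y * w * B) * dA ^ (Dm + 1)
      = ((x * z * m1) * ((-y) * (-w) * m2) - ((-y) * z * m4) * (x * (-w) * m3)) * dA ^ Dm) :
    dA ^ Dm * (m1 * m2 - m3 * m4) = dA ^ Dm * (dA * B) := by
  have key2 : B * dA ^ (Dm + 1) = (m1 * m2 - m4 * m3) * dA ^ Dm := by
    calc B * dA ^ (Dm + 1)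
        = (x * x) * (z * z) * (y * y) * (w * w) * (B * dA ^ (Dm + 1)) := by
          rw [hx, hz, hy, hw]; ring
      _ = (x * z * y * w) * ((x * z * (y * w * B)) * dA ^ (Dm + 1)) := by ring
      _ = (x * z * y * w) *
            (((x * z * m1) * ((-y) * (-w) * m2) - ((-y) * z * m4) * (x * (-w) * m3)) * dA ^ Dm) := by
          rw [h1]
      _ = ((x * x) * (z * z) * (y * y) * (w * w) * (m1 * m2)
            - (x * x) * (z * z) * (y * y) * (w * w) * (m4 * m3)) * dA ^ Dm := by ring
      _ = (m1 * m2 - m4 * m3) * dA ^ Dm := by rw [hx, hz, hy, hw]; ring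
  linear_combination -key2

lemma jacobi_aux {R : Type*} [CommRing R] {m : ℕ} (A : Matrix (Fin (m + 2)) (Fin (m + 2)) R)
    (p q u v : Fin (m + 2)) (hpq : p.1 < q.1) (huv : u.1 < v.1) :
    A.det ^ m * ((A.submatrix p.succAbove u.succAbove).det * (A.submatrix q.succAbove v.succAbove).det
        - (A.submatrix p.succAbove v.succAbove).det * (A.submatrix q.succAbove u.succAbove).det)
      = A.det ^ m * (A.det *
          (A.submatrix (p.succAbove ∘ (⟨q.1 - 1, by have := q.isLt; omega⟩ : Fin (m + 1)).succAbove)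
            (u.succAbove ∘ (⟨v.1 - 1, by have := v.isLt; omega⟩ : Fin (m + 1)).succAbove)).det) := by
  set q' : Fin (m + 1) := ⟨q.1 - 1, by have := q.isLt; omega⟩ with hq'def
  set v' : Fin (m + 1) := ⟨v.1 - 1, by have := v.isLt; omega⟩ with hv'def
  have hq : p.succAbove q' = q := by
    apply Fin.ext; rw [succAbove_val]; simp only [skip, hq'def]; split <;> omega
  have hv : u.succAbove v' = v := by
    apply Fin.ext; rw [succAbove_val]; simp only [skip, hv'def]; split <;> omega
  have hq1 : q.1 = q'.1 + 1 := by simp only [hq'def]; omega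
  have hv1 : v.1 = v'.1 + 1 := by simp only [hv'def]; omega
  -- F1
  have hadj : (adjugate A).det = A.det ^ (m + 1) := by
    rw [det_adjugate]; congr 1; simp
  have hmul : ((A.updateRow p (Pi.single u 1)).updateRow q (Pi.single v 1)) * adjugate A
      = ((A.det • (1 : Matrix (Fin (m + 2)) (Fin (m + 2)) R)).updateRow p
          (adjugate A u)).updateRow q (adjugate A v) := by
    rw [updateRow_mul', updateRow_mul', mul_adjugate, single_one_vecMul, single_one_vecMul]; rfl
  have hF : ((A.updateRow p (Pi.single u 1)).updateRow q (Pi.single v 1)).det * A.det ^ (m + 1)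
      = (adjugate A u p * adjugate A v q - adjugate A u q * adjugate A v p) * A.det ^ m := by
    calc ((A.updateRow p (Pi.single u 1)).updateRow q (Pi.single v 1)).det * A.det ^ (m + 1)
        = ((A.updateRow p (Pi.single u 1)).updateRow q (Pi.single v 1)).det * (adjugate A).det := by
          rw [hadj]
      _ = (((A.updateRow p (Pi.single u 1)).updateRow q (Pi.single v 1)) * adjugate A).det :=
          (det_mul _ _).symm
      _ = (((A.det • (1 : Matrix (Fin (m + 2)) (Fin (m + 2)) R)).updateRow p
            (adjugate A u)).updateRow q (adjugate A v)).det := by rw [hmul]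
      _ = (adjugate A u p * adjugate A v q - adjugate A u q * adjugate A v p) * A.det ^ m :=
          det_scaled_two_rows _ p q q' hq _ _
  -- substitute
  have hD := detD_eq A p u q' v'
  rw [hq, hv] at hD
  have hup : adjugate A u p
      = (-1 : R) ^ (p.1 + u.1) * (A.submatrix p.succAbove u.succAbove).det :=
    adjugate_fin_succ_eq_det_submatrix A u p
  have hvq : adjugate A v q
      = (-1 : R) ^ (q.1 + v.1) * (A.submatrix q.succAbove v.succAbove).det :=
    adjugate_fin_succ_eq_det_submatrix A v q
  have huq : adjugate A u q
      = (-1 : R) ^ (q.1 + u.1) * (A.submatrix q.succAbove u.succAbove).det :=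
    adjugate_fin_succ_eq_det_submatrix A u q
  have hvp : adjugate A v p
      = (-1 : R) ^ (p.1 + v.1) * (A.submatrix p.succAbove v.succAbove).det :=
    adjugate_fin_succ_eq_det_submatrix A v p
  rw [hD, hup, hvq, huq, hvp] at hF
  -- sign normalization
  have e_pu : (-1 : R) ^ (p.1 + u.1) = (-1 : R) ^ p.1 * (-1 : R) ^ u.1 := pow_add _ _ _
  have e_qv : (-1 : R) ^ (q.1 + v.1) = (-(-1 : R) ^ q'.1) * (-(-1 : R) ^ v'.1) := by
    rw [hq1, hv1, pow_add, npow_succ', npow_succ']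
  have e_qu : (-1 : R) ^ (q.1 + u.1) = (-(-1 : R) ^ q'.1) * (-1 : R) ^ u.1 := by
    rw [hq1, pow_add, npow_succ']
  have e_pv : (-1 : R) ^ (p.1 + v.1) = (-1 : R) ^ p.1 * (-(-1 : R) ^ v'.1) := by
    rw [hv1, pow_add, npow_succ']
  have e_qv' : (-1 : R) ^ (q'.1 + v'.1) = (-1 : R) ^ q'.1 * (-1 : R) ^ v'.1 := pow_add _ _ _
  rw [e_pu, e_qv, e_qu, e_pv, e_qv'] at hF
  exact sign_algebra ((-1 : R) ^ p.1) ((-1 : R) ^ u.1) ((-1 : R) ^ q'.1) ((-1 : R) ^ v'.1)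
    A.det _ _ _ _ _ m (neg_one_sq_pow _) (neg_one_sq_pow _) (neg_one_sq_pow _) (neg_one_sq_pow _)
    (by linear_combination hF)

lemma jacobi_fin {R : Type*} [CommRing R] {m : ℕ} (A : Matrix (Fin (m + 2)) (Fin (m + 2)) R)
    (p q u v : Fin (m + 2)) (hpq : p.1 < q.1) (huv : u.1 < v.1) :
    (A.submatrix p.succAbove u.succAbove).det * (A.submatrix q.succAbove v.succAbove).det
        - (A.submatrix p.succAbove v.succAbove).det * (A.submatrix q.succAbove u.succAbove).det
      = A.det *
          (A.submatrix (p.succAbove ∘ (⟨q.1 - 1, by have := q.isLt; omega⟩ : Fin (m + 1)).succAbove)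
            (u.succAbove ∘ (⟨v.1 - 1, by have := v.isLt; omega⟩ : Fin (m + 1)).succAbove)).det := by
  set S := MvPolynomial (Fin (m + 2) × Fin (m + 2)) ℤ
  set X : Matrix (Fin (m + 2)) (Fin (m + 2)) S :=
    Matrix.of fun i j => MvPolynomial.X (i, j) with hXdef
  have hX : X.det ≠ 0 := by
    intro h0
    have h1 : (MvPolynomial.eval (fun ij : Fin (m + 2) × Fin (m + 2) =>
        if ij.1 = ij.2 then (1 : ℤ) else 0)) X.det = 0 := by
      rw [h0]; simp
    rw [RingHom.map_det, RingHom.mapMatrix_apply] at h1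
    have h2 : X.map (MvPolynomial.eval (fun ij : Fin (m + 2) × Fin (m + 2) =>
        if ij.1 = ij.2 then (1 : ℤ) else 0)) = (1 : Matrix _ _ ℤ) := by
      ext i j
      simp [hXdef, Matrix.map_apply, Matrix.one_apply]
    rw [h2, det_one] at h1
    exact one_ne_zero h1
  have keyS := mul_left_cancel₀ (pow_ne_zero m hX) (jacobi_aux X p q u v hpq huv)
  -- transfer along the evaluation hom
  set φ : S →+* R :=
    (MvPolynomial.eval₂Hom (Int.castRingHom R) fun ij : Fin (m + 2) × Fin (m + 2) =>
      A ij.1 ij.2) with hphidef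
  have hmapX : X.map φ = A := by
    ext i j
    show φ (MvPolynomial.X (i, j)) = A i j
    rw [hphidef]
    exact MvPolynomial.eval₂Hom_X' _ _ _
  have htrans : ∀ {k : ℕ} (f g : Fin k → Fin (m + 2)),
      φ ((X.submatrix f g).det) = (A.submatrix f g).det := by
    intro k f g
    rw [RingHom.map_det, RingHom.mapMatrix_apply]
    congr 1
    ext i j
    show φ (MvPolynomial.X (f i, g j)) = A (f i) (g j)
    rw [hphidef]
    exact MvPolynomial.eval₂Hom_X' _ _ _
  have hdet : φ X.det = A.det := by rw [RingHom.map_det, RingHom.mapMatrix_apply, hmapX]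
  have := congrArg φ keyS
  rw [map_sub, _root_.map_mul, _root_.map_mul, _root_.map_mul, htrans, htrans, htrans, htrans, htrans, hdet] at this
  exact this

end Helpers

/-- **Sign-free 2×2 Jacobi identity for minors.**  For `n ≥ 2`, rows `p < q` and
columns `u < v` of an `n × n` matrix `A` over a commutative ring,
`m(p,u)·m(q,v) − m(p,v)·m(q,u) = det A · det B`, where `m(r,c)` is the `(r,c)`
minor of `A` and `B` is the `(n-2) × (n-2)` submatrix of `A` obtained by
deleting rows `p, q` and columns `u, v`. -/
theorem jacobi_two_by_two_minors {R : Type*} [CommRing R] {n : ℕ} (hn : 2 ≤ n)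
    (A : Matrix (Fin n) (Fin n) R) (p q u v : Fin n)
    (hpq : p.1 < q.1) (huv : u.1 < v.1) :
    dmMinor A p u * dmMinor A q v - dmMinor A p v * dmMinor A q u
      = A.det *
        (Matrix.of fun r c : Fin (n - 2) =>
          A ⟨skip q.1 (skip p.1 r.1), by
                have := skip_le p.1 r.1; have := skip_le q.1 (skip p.1 r.1); omega⟩
            ⟨skip v.1 (skip u.1 c.1), by
                have := skip_le u.1 c.1; have := skip_le v.1 (skip u.1 c.1); omega⟩).det := by
  obtain ⟨m, rfl⟩ : ∃ m, n = m + 2 := ⟨n - 2, by omega⟩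
  have hB : (Matrix.of fun r c : Fin (m + 2 - 2) =>
        A ⟨skip q.1 (skip p.1 r.1), by
              have := skip_le p.1 r.1; have := skip_le q.1 (skip p.1 r.1); omega⟩
          ⟨skip v.1 (skip u.1 c.1), by
              have := skip_le u.1 c.1; have := skip_le v.1 (skip u.1 c.1); omega⟩)
      = A.submatrix
          (p.succAbove ∘ (⟨q.1 - 1, by have := q.isLt; omega⟩ : Fin (m + 1)).succAbove)
          (u.succAbove ∘ (⟨v.1 - 1, by have := v.isLt; omega⟩ : Fin (m + 1)).succAbove) := by
    ext r c
    show A _ _ = A _ _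
    congr 1
    · apply Fin.ext
      show skip q.1 (skip p.1 r.1) = _
      rw [Function.comp_apply, succAbove_val, succAbove_val]
      exact skip_skip hpq
    · apply Fin.ext
      show skip v.1 (skip u.1 c.1) = _
      rw [Function.comp_apply, succAbove_val, succAbove_val]
      exact skip_skip huv
  rw [dmMinor_eq A p u, dmMinor_eq A q v, dmMinor_eq A p v, dmMinor_eq A q u, hB]
  exact jacobi_fin A p q u v hpq huv
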